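/- Let R, S ∈ ℚ[[a,b]] with zero constant terms satisfy R = a(1+R)(1+S)^2 and S = b(1+R)^2(1+S). Then for all integers i, j ≥ 1, the coefficient of a^{i-1}b^{j-1} in (1+R)(1+S) equals ((2i+2j-3)/((2i-1)(2j-1)))·C(2j+i-3, i-1)·C(2i+j-3, j-1). -/

import Mathlib

open MvPowerSeries Finsupp

private def chi (i j : ℕ) : ℚ := if i = 0 ∨ j = 0 then 0 else 1

private lemma chi_left (j : ℕ) : chi 0 j = 0 := by simp [chi]
private lemma chi_right (i : ℕ) : chi i 0 = 0 := by simp [chi]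
private lemma chi_succ (i j : ℕ) : chi (i+1) (j+1) = 1 := by simp [chi]
private lemma chi_symm (i j : ℕ) : chi i j = chi j i := by
  unfold chi
  by_cases h : i = 0 ∨ j = 0
  · rw [if_pos h, if_pos h.symm]
  · rw [if_neg h, if_neg (fun hc => h hc.symm)]

/-- Closed-form candidate for the coefficient of `a^i b^j` in `(1+R)^p (1+S)^q`. -/
private def ff (i j p q : ℕ) : ℚ :=
  (Nat.choose (p + i + 2*j - 1) i : ℚ) * (Nat.choose (q + 2*i + j - 1) j : ℚ) -
    4 * (Nat.choose (p + i + 2*j - 1) (i-1) : ℚ) * (Nat.choose (q + 2*i + j - 1) (j-1) : ℚ)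
      * chi i j

private lemma pascalQ (n k : ℕ) :
    ((n+1).choose (k+1) : ℚ) = (n.choose k : ℚ) + (n.choose (k+1) : ℚ) := by
  exact_mod_cast Nat.choose_succ_succ n k

private lemma ff_symm (i j p q : ℕ) : ff i j p q = ff j i q p := by
  unfold ff
  rw [show q + j + 2*i - 1 = q + 2*i + j - 1 by omega,
    show p + 2*j + i - 1 = p + i + 2*j - 1 by omega, chi_symm j i]
  ring

private lemma ff_base (i j : ℕ) : ff i j 0 0 = if i = 0 ∧ j = 0 then 1 else 0 := by
  unfold ff
  rcases Nat.eq_zero_or_pos i with hi | hi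
  · subst hi
    rcases Nat.eq_zero_or_pos j with hj | hj
    · subst hj; simp [chi_left]
    · rw [if_neg (by omega), chi_left,
        show 0 + 2*0 + j - 1 = j - 1 by omega,
        Nat.choose_eq_zero_of_lt (show j - 1 < j by omega)]
      simp
  · rcases Nat.eq_zero_or_pos j with hj | hj
    · subst hj
      rw [if_neg (by omega), chi_right,
        show 0 + i + 2*0 - 1 = i - 1 by omega,
        Nat.choose_eq_zero_of_lt (show i - 1 < i by omega)]
      simp
    · obtain ⟨i', rfl⟩ : ∃ i', i = i' + 1 := ⟨i - 1, by omega⟩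
      obtain ⟨j', rfl⟩ : ∃ j', j = j' + 1 := ⟨j - 1, by omega⟩
      rw [if_neg (by omega), chi_succ]
      set i := i' + 1
      set j := j' + 1
      have e1 : 0 + i + 2*j - 1 = i + 2*j - 1 := by omega
      have e2 : 0 + 2*i + j - 1 = 2*i + j - 1 := by omega
      rw [e1, e2]
      have h1 : Nat.choose (i + 2*j - 1) i * i = Nat.choose (i + 2*j - 1) (i-1) * (2*j) := by
        have := Nat.choose_succ_right_eq (i + 2*j - 1) (i - 1)
        rw [show i - 1 + 1 = i by omega] at this
        rw [this, show i + 2*j - 1 - (i-1) = 2*j by omega]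
      have h2 : Nat.choose (2*i + j - 1) j * j = Nat.choose (2*i + j - 1) (j-1) * (2*i) := by
        have := Nat.choose_succ_right_eq (2*i + j - 1) (j - 1)
        rw [show j - 1 + 1 = j by omega] at this
        rw [this, show 2*i + j - 1 - (j-1) = 2*i by omega]
      have h1q : (Nat.choose (i + 2*j - 1) i : ℚ) * i
          = (Nat.choose (i + 2*j - 1) (i-1) : ℚ) * (2*j) := by exact_mod_cast h1
      have h2q : (Nat.choose (2*i + j - 1) j : ℚ) * j
          = (Nat.choose (2*i + j - 1) (j-1) : ℚ) * (2*i) := by exact_mod_cast h2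
      have hiq : (i : ℚ) ≠ 0 := by exact_mod_cast (by omega : i ≠ 0)
      have hjq : (j : ℚ) ≠ 0 := by exact_mod_cast (by omega : j ≠ 0)
      have key : ((Nat.choose (i + 2*j - 1) i : ℚ) * (Nat.choose (2*i + j - 1) j : ℚ)
            - 4 * (Nat.choose (i + 2*j - 1) (i-1) : ℚ) * (Nat.choose (2*i + j - 1) (j-1) : ℚ) * 1)
            * ((i:ℚ) * j) = 0 * ((i:ℚ)*j) := by
        linear_combination ((Nat.choose (2*i + j - 1) j : ℚ) * (j:ℚ)) * h1q
          + ((Nat.choose (i + 2*j - 1) (i-1) : ℚ) * (2*(j:ℚ))) * h2q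
      exact mul_right_cancel₀ (mul_ne_zero hiq hjq) key

private lemma ff_rec1 (i j p q : ℕ) :
    ff i j (p+1) q = ff i j p q + (if i = 0 then 0 else ff (i-1) j (p+1) (q+2)) := by
  rcases Nat.eq_zero_or_pos i with hi | hi
  · subst hi
    rw [if_pos rfl]
    unfold ff
    simp only [chi_left, mul_zero, sub_zero, Nat.choose_zero_right, Nat.cast_one, one_mul, add_zero]
  · obtain ⟨i', rfl⟩ : ∃ i', i = i' + 1 := ⟨i - 1, by omega⟩
    rw [if_neg (by omega), Nat.add_sub_cancel]
    rcases Nat.eq_zero_or_pos j with hj | hj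
    · subst hj
      unfold ff
      simp only [chi_right, mul_zero, sub_zero, Nat.choose_zero_right, Nat.cast_one, mul_one]
      rw [show p + 1 + (i'+1) + 0 - 1 = (p + i') + 1 by omega,
        show p + (i'+1) + 0 - 1 = p + i' by omega,
        show p + 1 + i' + 0 - 1 = p + i' by omega,
        pascalQ (p+i') i']
      ring
    · obtain ⟨j', rfl⟩ : ∃ j', j = j' + 1 := ⟨j - 1, by omega⟩
      unfold ff
      simp only [chi_succ, Nat.add_sub_cancel]
      rw [show (p+1) + (i'+1) + 2*(j'+1) - 1 = (p + i' + 2*j' + 2) + 1 by omega,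
        show p + (i'+1) + 2*(j'+1) - 1 = p + i' + 2*j' + 2 by omega,
        show (p+1) + i' + 2*(j'+1) - 1 = p + i' + 2*j' + 2 by omega,
        show q + 2*(i'+1) + (j'+1) - 1 = q + 2*i' + j' + 2 by omega,
        show (q+2) + 2*i' + (j'+1) - 1 = q + 2*i' + j' + 2 by omega]
      set M := p + i' + 2*j' + 2 with hM
      rcases Nat.eq_zero_or_pos i' with hi' | hi'
      · subst hi'
        simp only [chi_left, chi_succ, mul_zero, sub_zero]
        rw [pascalQ M 0,
          show ((M+1).choose 0 : ℚ) = (M.choose 0 : ℚ) by simp]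
        ring
      · obtain ⟨i'', rfl⟩ : ∃ i'', i' = i'' + 1 := ⟨i' - 1, by omega⟩
        simp only [chi_succ, Nat.add_sub_cancel]
        rw [pascalQ M (i''+1), pascalQ M i'']
        ring

private lemma ff_rec2 (i j p q : ℕ) :
    ff i j p (q+1) = ff i j p q + (if j = 0 then 0 else ff i (j-1) (p+2) (q+1)) := by
  rw [ff_symm i j p (q+1), ff_rec1 j i q p, ff_symm j i q p]
  congr 1
  rcases Nat.eq_zero_or_pos j with hj | hj
  · simp [hj]
  · rw [if_neg (by omega), if_neg (by omega), ff_symm]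

private lemma coeff_X0_mul (W : MvPowerSeries (Fin 2) ℚ) (i j : ℕ) :
    coeff (single (0 : Fin 2) (i+1) + single 1 j) (X 0 * W)
      = coeff (single 0 i + single 1 j) W := by
  have h : single (0 : Fin 2) (i+1) + single 1 j
      = single (0 : Fin 2) 1 + (single 0 i + single 1 j) := by
    rw [show i + 1 = 1 + i by omega, Finsupp.single_add]
    abel
  rw [h, show (X 0 : MvPowerSeries (Fin 2) ℚ) = monomial (single 0 1) 1 from rfl,
    coeff_add_monomial_mul, one_mul]

private lemma coeff_X0_mul_zero (W : MvPowerSeries (Fin 2) ℚ) (j : ℕ) :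
    coeff (single (0 : Fin 2) 0 + single 1 j) (X 0 * W) = 0 := by
  rw [show (X 0 : MvPowerSeries (Fin 2) ℚ) = monomial (single 0 1) 1 from rfl,
    coeff_monomial_mul, if_neg]
  intro h
  have := Finsupp.le_def.mp h 0
  simp [Finsupp.single_apply] at this

private lemma coeff_X1_mul (W : MvPowerSeries (Fin 2) ℚ) (i j : ℕ) :
    coeff (single (0 : Fin 2) i + single 1 (j+1)) (X 1 * W)
      = coeff (single 0 i + single 1 j) W := by
  have h : single (0 : Fin 2) i + single 1 (j+1)
      = single (1 : Fin 2) 1 + (single 0 i + single 1 j) := by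
    rw [show j + 1 = 1 + j by omega, Finsupp.single_add]
    abel
  rw [h, show (X 1 : MvPowerSeries (Fin 2) ℚ) = monomial (single 1 1) 1 from rfl,
    coeff_add_monomial_mul, one_mul]

private lemma coeff_X1_mul_zero (W : MvPowerSeries (Fin 2) ℚ) (i : ℕ) :
    coeff (single (0 : Fin 2) i + single 1 0) (X 1 * W) = 0 := by
  rw [show (X 1 : MvPowerSeries (Fin 2) ℚ) = monomial (single 1 1) 1 from rfl,
    coeff_monomial_mul, if_neg]
  intro h
  have := Finsupp.le_def.mp h 1
  simp [Finsupp.single_apply] at this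

private lemma A_eq (R S : MvPowerSeries (Fin 2) ℚ)
    (hR : R = X 0 * (1 + R) * (1 + S) ^ 2)
    (hS : S = X 1 * (1 + R) ^ 2 * (1 + S)) :
    ∀ (n i j : ℕ), i + j = n → ∀ p q : ℕ,
      coeff (single (0 : Fin 2) i + single 1 j) ((1+R)^p * (1+S)^q) = ff i j p q := by
  have key1 : ∀ p q : ℕ, (1+R)^(p+1) * (1+S)^q
      = (1+R)^p * (1+S)^q + X 0 * ((1+R)^(p+1) * (1+S)^(q+2)) := by
    intro p q; linear_combination ((1+R)^p * (1+S)^q) * hR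
  have key2 : ∀ p q : ℕ, (1+R)^p * (1+S)^(q+1)
      = (1+R)^p * (1+S)^q + X 1 * ((1+R)^(p+2) * (1+S)^(q+1)) := by
    intro p q; linear_combination ((1+R)^p * (1+S)^q) * hS
  intro n
  induction n using Nat.strong_induction_on with
  | _ n IH =>
  intro i j hij
  have base : ∀ q, coeff (single (0 : Fin 2) i + single 1 j) ((1+R)^0 * (1+S)^q)
      = ff i j 0 q := by
    intro q
    induction q with
    | zero =>
      rw [pow_zero, pow_zero, one_mul, ff_base, coeff_one]
      rcases Nat.eq_zero_or_pos (i + j) with h0 | h0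
      · have hi : i = 0 := by omega
        have hj : j = 0 := by omega
        subst hi; subst hj
        simp
      · rw [if_neg, if_neg (by omega)]
        intro hc
        have h1 := DFunLike.congr_fun hc 0
        have h2 := DFunLike.congr_fun hc 1
        simp [Finsupp.single_apply] at h1 h2
        omega
    | succ q ihq =>
      rw [key2 0 q, map_add, ihq, ff_rec2]
      congr 1
      rcases Nat.eq_zero_or_pos j with hj | hj
      · subst hj
        rw [if_pos rfl, coeff_X1_mul_zero]
      · obtain ⟨j', rfl⟩ : ∃ j', j = j' + 1 := ⟨j - 1, by omega⟩
        rw [if_neg (by omega), Nat.add_sub_cancel, coeff_X1_mul,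
          IH (i + j') (by omega) i j' rfl (0+2) (q+1)]
  intro p
  induction p with
  | zero => exact base
  | succ p ihp =>
    intro q
    rw [key1 p q, map_add, ihp q, ff_rec1]
    congr 1
    rcases Nat.eq_zero_or_pos i with hi | hi
    · subst hi
      rw [if_pos rfl, coeff_X0_mul_zero]
    · obtain ⟨i', rfl⟩ : ∃ i', i = i' + 1 := ⟨i - 1, by omega⟩
      rw [if_neg (by omega), Nat.add_sub_cancel, coeff_X0_mul,
        IH (i' + j) (by omega) i' j rfl (p+1) (q+2)]

theorem marked_tail_coeff (R S : MvPowerSeries (Fin 2) ℚ)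
    (hR0 : MvPowerSeries.constantCoeff R = 0)
    (hS0 : MvPowerSeries.constantCoeff S = 0)
    (hR : R = MvPowerSeries.X 0 * (1 + R) * (1 + S) ^ 2)
    (hS : S = MvPowerSeries.X 1 * (1 + R) ^ 2 * (1 + S))
    (i j : ℕ) (hi : 1 ≤ i) (hj : 1 ≤ j) :
    MvPowerSeries.coeff (Finsupp.single 0 (i - 1) + Finsupp.single 1 (j - 1))
        ((1 + R) * (1 + S))
      = (((2*i + 2*j - 3 : ℕ) : ℚ) / (((2*i - 1 : ℕ) : ℚ) * ((2*j - 1 : ℕ) : ℚ))) *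
          (Nat.choose (2*j + i - 3) (i - 1) : ℚ) * (Nat.choose (2*i + j - 3) (j - 1) : ℚ) := by
  obtain ⟨i', rfl⟩ : ∃ i', i = i' + 1 := ⟨i - 1, by omega⟩
  obtain ⟨j', rfl⟩ : ∃ j', j = j' + 1 := ⟨j - 1, by omega⟩
  simp only [Nat.add_sub_cancel]
  rw [show ((1 + R) * (1 + S)) = (1+R)^1 * (1+S)^1 by ring,
    A_eq R S hR hS (i' + j') i' j' rfl 1 1,
    show 2*(i'+1) + 2*(j'+1) - 3 = 2*i' + 2*j' + 1 by omega,
    show 2*(i'+1) - 1 = 2*i' + 1 by omega,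
    show 2*(j'+1) - 1 = 2*j' + 1 by omega,
    show 2*(j'+1) + (i'+1) - 3 = i' + 2*j' by omega,
    show 2*(i'+1) + (j'+1) - 3 = 2*i' + j' by omega]
  unfold ff
  rw [show 1 + i' + 2*j' - 1 = i' + 2*j' by omega,
    show 1 + 2*i' + j' - 1 = 2*i' + j' by omega]
  rcases Nat.eq_zero_or_pos i' with hi' | hi'
  · subst hi'
    rw [chi_left]
    simp only [Nat.mul_zero, Nat.zero_add, Nat.zero_mul, Nat.add_zero, mul_zero, sub_zero,
      Nat.choose_zero_right, Nat.choose_self, Nat.cast_one, one_mul, mul_one, zero_add]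
    have h0 : ((2*j' + 1 : ℕ) : ℚ) ≠ 0 := by
      have : (0:ℚ) < ((2*j' + 1 : ℕ) : ℚ) := by exact_mod_cast Nat.succ_pos (2*j')
      exact this.ne'
    field_simp
  · rcases Nat.eq_zero_or_pos j' with hj' | hj'
    · subst hj'
      obtain ⟨i'', rfl⟩ : ∃ i'', i' = i'' + 1 := ⟨i' - 1, by omega⟩
      rw [chi_right]
      simp only [Nat.mul_zero, Nat.zero_add, Nat.zero_mul, Nat.add_zero, mul_zero, sub_zero,
        Nat.choose_zero_right, Nat.choose_self, Nat.cast_one, one_mul, mul_one, zero_add]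
      have h0 : ((2*(i''+1) + 1 : ℕ) : ℚ) ≠ 0 := by
        have : (0:ℚ) < ((2*(i''+1) + 1 : ℕ) : ℚ) := by exact_mod_cast Nat.succ_pos _
        exact this.ne'
      field_simp
    · obtain ⟨a, rfl⟩ : ∃ a, i' = a + 1 := ⟨i' - 1, by omega⟩
      obtain ⟨b, rfl⟩ : ∃ b, j' = b + 1 := ⟨j' - 1, by omega⟩
      rw [chi_succ]
      simp only [Nat.add_sub_cancel]
      have h1 : Nat.choose (a+1 + 2*(b+1)) (a+1) * (a+1)
          = Nat.choose (a+1 + 2*(b+1)) a * (2*(b+1)+1) := by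
        have := Nat.choose_succ_right_eq (a+1 + 2*(b+1)) a
        rw [this, show a+1 + 2*(b+1) - a = 2*(b+1) + 1 by omega]
      have h2 : Nat.choose (2*(a+1) + (b+1)) (b+1) * (b+1)
          = Nat.choose (2*(a+1) + (b+1)) b * (2*(a+1)+1) := by
        have := Nat.choose_succ_right_eq (2*(a+1) + (b+1)) b
        rw [this, show 2*(a+1) + (b+1) - b = 2*(a+1) + 1 by omega]
      have h1q : (Nat.choose (a+1 + 2*(b+1)) (a+1) : ℚ) * ((a:ℚ)+1)
          = (Nat.choose (a+1 + 2*(b+1)) a : ℚ) * (2*((b:ℚ)+1)+1) := by exact_mod_cast h1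
      have h2q : (Nat.choose (2*(a+1) + (b+1)) (b+1) : ℚ) * ((b:ℚ)+1)
          = (Nat.choose (2*(a+1) + (b+1)) b : ℚ) * (2*((a:ℚ)+1)+1) := by exact_mod_cast h2
      have hEF : (((2*(a+1) + 1 : ℕ) : ℚ) * ((2*(b+1) + 1 : ℕ) : ℚ)) ≠ 0 := by
        have hE : (0:ℚ) < ((2*(a+1) + 1 : ℕ) : ℚ) := by exact_mod_cast Nat.succ_pos _
        have hF : (0:ℚ) < ((2*(b+1) + 1 : ℕ) : ℚ) := by exact_mod_cast Nat.succ_pos _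
        exact (mul_pos hE hF).ne'
      rw [div_mul_eq_mul_div, div_mul_eq_mul_div, eq_div_iff hEF]
      push_cast
      linear_combination (4*(Nat.choose (2*(a+1) + (b+1)) (b+1) : ℚ)*((b:ℚ)+1)) * h1q
        + (4*(Nat.choose (a+1 + 2*(b+1)) a : ℚ)*(2*((b:ℚ)+1)+1)) * h2q
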